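/- In the Artin group A(4,4,2) = ⟨s, t, r | stst = tsts, trtr = rtrt, sr = rs⟩, for every k ≥ 1 and all nonzero integers n_1, m_1, …, n_k, m_k, the element strt commutes with the element (r^{n_1} t^{-1} s^{m_1} t)(r^{n_2} t^{-1} s^{m_2} t) ⋯ (r^{n_k} t^{-1} s^{m_k} t). In particular, for each such product w, the subgroup ⟨strt, w⟩ of A(4,4,2) is abelian. -/

import Mathlib

namespace A442

/-- The defining relations of the Artin group
`A(4,4,2) = ⟨s, t, r | stst = tsts, trtr = rtrt, sr = rs⟩`,
with `0, 1, 2` playing the roles of `s, t, r`. -/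
def rels : Set (FreeGroup (Fin 3)) :=
  { FreeGroup.of 0 * FreeGroup.of 1 * FreeGroup.of 0 * FreeGroup.of 1 *
      (FreeGroup.of 1 * FreeGroup.of 0 * FreeGroup.of 1 * FreeGroup.of 0)⁻¹,
    FreeGroup.of 1 * FreeGroup.of 2 * FreeGroup.of 1 * FreeGroup.of 2 *
      (FreeGroup.of 2 * FreeGroup.of 1 * FreeGroup.of 2 * FreeGroup.of 1)⁻¹,
    FreeGroup.of 0 * FreeGroup.of 2 * (FreeGroup.of 2 * FreeGroup.of 0)⁻¹ }

/-- The Artin group `A(4,4,2)`. -/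
abbrev Grp := PresentedGroup rels

def s : Grp := PresentedGroup.of 0
def t : Grp := PresentedGroup.of 1
def r : Grp := PresentedGroup.of 2

lemma rel_hold {x : FreeGroup (Fin 3)} (hx : x ∈ rels) :
    (QuotientGroup.mk x : Grp) = 1 := by
  rw [QuotientGroup.eq_one_iff]
  exact Subgroup.subset_normalClosure hx

lemma mk_eq {x y : FreeGroup (Fin 3)} (h : x * y⁻¹ ∈ rels) :
    (QuotientGroup.mk x : Grp) = QuotientGroup.mk y := by
  have := rel_hold h
  rw [QuotientGroup.mk_mul, QuotientGroup.mk_inv, mul_inv_eq_one] at this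
  exact this

lemma rel1 : s * t * s * t = t * s * t * s := by
  have := mk_eq (x := FreeGroup.of 0 * FreeGroup.of 1 * FreeGroup.of 0 * FreeGroup.of 1)
    (y := FreeGroup.of 1 * FreeGroup.of 0 * FreeGroup.of 1 * FreeGroup.of 0)
    (by left; rfl)
  simp only [QuotientGroup.mk_mul] at this
  exact this

lemma rel2 : t * r * t * r = r * t * r * t := by
  have := mk_eq (x := FreeGroup.of 1 * FreeGroup.of 2 * FreeGroup.of 1 * FreeGroup.of 2)
    (y := FreeGroup.of 2 * FreeGroup.of 1 * FreeGroup.of 2 * FreeGroup.of 1)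
    (by right; left; rfl)
  simp only [QuotientGroup.mk_mul] at this
  exact this

lemma rel3 : s * r = r * s := by
  have := mk_eq (x := FreeGroup.of 0 * FreeGroup.of 2)
    (y := FreeGroup.of 2 * FreeGroup.of 0)
    (by right; right; rfl)
  simp only [QuotientGroup.mk_mul] at this
  exact this

lemma comm_r : Commute (s * t * r * t) r := by
  show _ = _
  have h2 : t * (r * (t * r)) = r * (t * (r * t)) := by
    simpa [mul_assoc] using rel2
  have h3 : s * r = r * s := rel3
  calc s * t * r * t * r = s * (t * (r * (t * r))) := by simp [mul_assoc]
    _ = s * (r * (t * (r * t))) := by rw [h2]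
    _ = s * r * (t * (r * t)) := by simp [mul_assoc]
    _ = r * s * (t * (r * t)) := by rw [h3]
    _ = r * (s * t * r * t) := by simp [mul_assoc]

lemma comm_conj : Commute (s * t * r * t) (t⁻¹ * s * t) := by
  show _ = _
  have h1 : s * (t * (s * t)) = t * (s * (t * s)) := by
    simpa [mul_assoc] using rel1
  have h3 : s * r = r * s := rel3
  calc s * t * r * t * (t⁻¹ * s * t) = s * (t * (r * (s * t))) := by
        simp [mul_assoc]
    _ = s * (t * ((r * s) * t)) := by simp [mul_assoc]
    _ = s * (t * ((s * r) * t)) := by rw [h3]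
    _ = t⁻¹ * (t * (s * (t * (s * (r * t))))) := by simp [mul_assoc]
    _ = t⁻¹ * (t * (s * (t * s)) * (r * t)) := by simp [mul_assoc]
    _ = t⁻¹ * (s * (t * (s * t)) * (r * t)) := by rw [h1]
    _ = t⁻¹ * s * t * (s * t * r * t) := by simp [mul_assoc]

lemma closure_pair_comm {G : Type*} [Group G] {a b : G} (h : Commute a b) :
    IsMulCommutative (Subgroup.closure {a, b}) := by
  constructor
  constructor
  rintro ⟨x, hx⟩ ⟨y, hy⟩
  ext
  show x * y = y * x
  induction hx, hy using Subgroup.closure_induction₂ with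
  | mem u v hu hv =>
    rcases hu with rfl | rfl <;> rcases hv with rfl | rfl
    · rfl
    · exact h
    · exact h.symm
    · rfl
  | one_left v hv => simp
  | one_right v hv => simp
  | mul_left u v w hu hv hw h1 h2 => rw [mul_assoc, h2, ← mul_assoc, h1, mul_assoc]
  | mul_right u v w hu hv hw h1 h2 =>
    rw [← mul_assoc, h1, mul_assoc, h2, ← mul_assoc]
  | inv_left u v hu hv h1 =>
    exact ((Commute.symm (a := u) (b := v) h1).inv_right).symm
  | inv_right u v hu hv h1 =>
    exact Commute.inv_right (a := u) (b := v) h1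

end A442

open A442 in
/-- In `A(4,4,2)`, the element `strt` commutes with every product
`(r^{n₁}t⁻¹s^{m₁}t)⋯(r^{n_k}t⁻¹s^{m_k}t)` with all `nᵢ, mᵢ` nonzero; in particular
the subgroup generated by `strt` and such a product is abelian. -/
theorem A442_strt_commutes (k : ℕ) (hk : 1 ≤ k) (n m : Fin k → ℤ)
    (hn : ∀ p, n p ≠ 0) (hm : ∀ p, m p ≠ 0) :
    Commute (s * t * r * t)
      (((List.finRange k).map fun p => r ^ n p * t⁻¹ * s ^ m p * t).prod) ∧
    IsMulCommutative (Subgroup.closure {s * t * r * t,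
      ((List.finRange k).map fun p => r ^ n p * t⁻¹ * s ^ m p * t).prod}) := by
  have key : Commute (s * t * r * t)
      (((List.finRange k).map fun p => r ^ n p * t⁻¹ * s ^ m p * t).prod) := by
    apply Commute.list_prod_right
    intro x hx
    simp only [List.mem_map] at hx
    obtain ⟨p, -, rfl⟩ := hx
    have h1 : Commute (s * t * r * t) (r ^ n p) := comm_r.zpow_right _
    have h2 : Commute (s * t * r * t) (t⁻¹ * s ^ m p * t) := by
      have : t⁻¹ * s ^ m p * t = (t⁻¹ * s * t) ^ m p := by
        have := conj_zpow (i := m p) (a := t⁻¹) (b := s)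
        simpa [inv_inv] using this.symm
      rw [this]
      exact comm_conj.zpow_right _
    have := h1.mul_right h2
    simpa [mul_assoc] using this
  exact ⟨key, closure_pair_comm key⟩
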